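/- Let D be a division ring with center F and let T be a locally solvable periodic group. If T is a subgroup of D*, then T is locally finite. -/

import Mathlib

/-- A group is locally solvable if every finitely generated subgroup is solvable. -/
def IsLocallySolvable (G : Type*) [Group G] : Prop :=
  ∀ H : Subgroup G, H.FG → IsSolvable H

/-- A group is locally finite if every finitely generated subgroup is finite. -/
def IsLocallyFinite (G : Type*) [Group G] : Prop :=
  ∀ H : Subgroup G, H.FG → Finite H

lemma map_subtype_derivedSeries_one (G : Type*) [Group G] (n : ℕ) :
    (derivedSeries ↥(derivedSeries G 1) n).map (derivedSeries G 1).subtype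
      = derivedSeries G (n + 1) := by
  induction n with
  | zero =>
    rw [derivedSeries_zero, ← MonoidHom.range_eq_map, Subgroup.range_subtype]
  | succ n ih =>
    rw [derivedSeries_succ ↥(derivedSeries G 1) n, Subgroup.map_commutator, ih]
    exact (derivedSeries_succ G (n + 1)).symm

lemma finite_of_fg_torsion_derived (n : ℕ) :
    ∀ (G : Type u) [Group G], Group.FG G → (∀ g : G, IsOfFinOrder g) →
      derivedSeries G n = ⊥ → Finite G := by
  induction n with
  | zero =>
    intro G _ _ _ hbot
    rw [derivedSeries_zero] at hbot
    have h1 : ∀ g : G, g = 1 := fun g => Subgroup.mem_bot.mp (hbot ▸ Subgroup.mem_top g)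
    have : Subsingleton G := ⟨fun a b => (h1 a).trans (h1 b).symm⟩
    exact Finite.of_subsingleton
  | succ n ih =>
    intro G _ hfg htor hbot
    -- The abelianization is finitely generated and torsion, hence finite
    have habsurj : Function.Surjective (Abelianization.of : G →* Abelianization G) :=
      QuotientGroup.mk_surjective
    have habfg : Group.FG (Abelianization G) :=
      Group.fg_of_surjective (f := Abelianization.of) habsurj
    have habtor : Monoid.IsTorsion (Abelianization G) := by
      intro x
      obtain ⟨g, rfl⟩ := habsurj x
      exact Abelianization.of.isOfFinOrder (htor g)
    have habfin : Finite (Abelianization G) := CommGroup.finite_of_fg_torsion _ habtor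
    -- so the commutator subgroup has finite index
    set K : Subgroup G := derivedSeries G 1 with hK
    have hKcomm : K = commutator G := derivedSeries_one G
    have hquotfin : Finite (G ⧸ K) := by rw [hKcomm]; exact habfin
    have : K.FiniteIndex := Subgroup.finiteIndex_of_finite_quotient
    have hKfg : Group.FG K := Subgroup.fg_of_index_ne_zero K
    have hKtor : ∀ g : K, IsOfFinOrder g := fun g =>
      (Subgroup.subtype_injective K).isOfFinOrder_iff.mp (htor g)
    have hKbot : derivedSeries K n = ⊥ := by
      have := map_subtype_derivedSeries_one G n
      rw [hbot] at this
      exact (Subgroup.map_eq_bot_iff_of_injective _ (Subgroup.subtype_injective K)).mp this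
    have hKfin : Finite K := ih K hKfg hKtor hKbot
    exact Finite.of_equiv _ (Subgroup.groupEquivQuotientProdSubgroup (s := K)).symm

/-- A periodic locally solvable subgroup of the multiplicative group of a division
ring is locally finite. -/
theorem periodic_locallySolvable_subgroup_is_locallyFinite
    (D : Type*) [DivisionRing D] (T : Subgroup Dˣ)
    (hper : ∀ x ∈ T, IsOfFinOrder x)
    (hls : IsLocallySolvable T) :
    IsLocallyFinite T := by
  intro H hHfg
  have hsolv : IsSolvable H := hls H hHfg
  obtain ⟨n, hn⟩ := hsolv.solvable
  have hfg : Group.FG H := (Group.fg_iff_subgroup_fg H).mpr hHfg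
  have htor : ∀ g : H, IsOfFinOrder g := by
    intro g
    have h1 : IsOfFinOrder (g : T) :=
      (Subgroup.subtype_injective T).isOfFinOrder_iff.mp (hper _ (g : T).2)
    exact (Subgroup.subtype_injective H).isOfFinOrder_iff.mp h1
  exact finite_of_fg_torsion_derived n H hfg htor hn
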